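/- Let k be a field of characteristic p > 3 and W(1) = Der_k(k[X]/(X^p)). For any a with 2 ≤ a ≤ p−1, the two-dimensional subspace k·(1+x)∂ + k·(1+x)^a∂ is a Lie subalgebra of W(1), and it is maximal solvable: it is solvable and any solvable Lie subalgebra of W(1) strictly containing it does not exist. -/

import Mathlib

open Polynomial

set_option synthInstance.maxHeartbeats 1000000
set_option maxHeartbeats 1000000

/-- The truncated polynomial algebra `A(1) = k[X]/(X^p)`. -/
noncomputable abbrev TruncPolyAlg (k : Type*) [Field k] (p : ℕ) :=
  Polynomial k ⧸ Ideal.span {(X : Polynomial k) ^ p}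

/-- The image of `X` in `A(1) = k[X]/(X^p)`. -/
noncomputable abbrev truncX (k : Type*) [Field k] (p : ℕ) : TruncPolyAlg k p :=
  Ideal.Quotient.mk _ (X : Polynomial k)


section WittAux

variable (k : Type*) [Field k] (p : ℕ) [Fact p.Prime] [CharP k p]

instance trunc_nontrivial : Nontrivial (TruncPolyAlg k p) := by
  refine Ideal.Quotient.nontrivial_iff.mpr ?_
  intro h
  rw [Ideal.span_singleton_eq_top] at h
  exact Polynomial.not_isUnit_X
    (isUnit_of_dvd_unit (dvd_pow_self X (Fact.out : p.Prime).ne_zero) h)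

instance trunc_charP : CharP (TruncPolyAlg k p) p :=
  charP_of_injective_algebraMap' k p

lemma truncX_pow : truncX k p ^ p = 0 := by
  rw [← map_pow, Ideal.Quotient.eq_zero_iff_mem]
  exact Ideal.subset_span rfl

lemma poly_smul_def (g : Polynomial k) (m : TruncPolyAlg k p) :
    g • m = Ideal.Quotient.mk _ g * m := by
  obtain ⟨h, rfl⟩ := Ideal.Quotient.mk_surjective m
  rw [← map_mul, ← Ideal.Quotient.mk_eq_mk, ← Ideal.Quotient.mk_eq_mk,
    ← Submodule.Quotient.mk_smul, smul_eq_mul]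

/-- derivative pushed into the quotient, as derivation on polynomials -/
noncomputable def pd : Derivation k (Polynomial k) (TruncPolyAlg k p) :=
  Polynomial.mkDerivation k (1 : TruncPolyAlg k p)

lemma pd_X : pd k p X = 1 := Polynomial.mkDerivation_X k 1

lemma pd_vanish (g : Polynomial k) (hg : g ∈ Ideal.span {(X : Polynomial k) ^ p}) :
    pd k p g = 0 := by
  rw [Ideal.mem_span_singleton] at hg
  obtain ⟨h, rfl⟩ := hg
  have hXp : pd k p (X ^ p) = 0 := by
    rw [Derivation.leibniz_pow, pd_X, ← Nat.cast_smul_eq_nsmul (TruncPolyAlg k p)]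
    rw [CharP.cast_eq_zero, smul_eq_mul, zero_mul]
  rw [Derivation.leibniz, hXp, smul_zero, add_zero]
  rw [poly_smul_def, map_pow]
  rw [show (Ideal.Quotient.mk _ X : TruncPolyAlg k p) = truncX k p from rfl, truncX_pow,
    zero_mul]

noncomputable def delFun : TruncPolyAlg k p → TruncPolyAlg k p :=
  fun a => pd k p (Function.surjInv Ideal.Quotient.mk_surjective a)

lemma delFun_mk (g : Polynomial k) :
    delFun k p (Ideal.Quotient.mk _ g) = pd k p g := by
  have h : Ideal.Quotient.mk (Ideal.span {(X : Polynomial k) ^ p})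
      (Function.surjInv Ideal.Quotient.mk_surjective
        (Ideal.Quotient.mk (Ideal.span {(X : Polynomial k) ^ p}) g))
      = Ideal.Quotient.mk _ g :=
    Function.surjInv_eq Ideal.Quotient.mk_surjective _
  rw [Ideal.Quotient.eq] at h
  have h2 := pd_vanish k p _ h
  rw [map_sub, sub_eq_zero] at h2
  exact h2

noncomputable def del : Derivation k (TruncPolyAlg k p) (TruncPolyAlg k p) where
  toFun := delFun k p
  map_add' a b := by
    obtain ⟨g, rfl⟩ := Ideal.Quotient.mk_surjective a
    obtain ⟨h, rfl⟩ := Ideal.Quotient.mk_surjective b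
    rw [← map_add, delFun_mk, delFun_mk, delFun_mk, map_add]
  map_smul' c a := by
    obtain ⟨g, rfl⟩ := Ideal.Quotient.mk_surjective a
    have : c • (Ideal.Quotient.mk (Ideal.span {(X : Polynomial k) ^ p}) g)
        = Ideal.Quotient.mk _ (c • g) := by
      rw [← Ideal.Quotient.mk_eq_mk, ← Ideal.Quotient.mk_eq_mk, Submodule.Quotient.mk_smul]
    show delFun k p _ = c • delFun k p _
    rw [this, delFun_mk, delFun_mk, Derivation.map_smul]
  map_one_eq_zero' := by
    have : (1 : TruncPolyAlg k p) = Ideal.Quotient.mk _ (1 : Polynomial k) := rfl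
    show delFun k p 1 = 0
    rw [this, delFun_mk, Derivation.map_one_eq_zero]
  leibniz' a b := by
    obtain ⟨g, rfl⟩ := Ideal.Quotient.mk_surjective a
    obtain ⟨h, rfl⟩ := Ideal.Quotient.mk_surjective b
    show delFun k p _ = Ideal.Quotient.mk _ g • delFun k p _ + Ideal.Quotient.mk _ h • delFun k p _
    rw [← map_mul, delFun_mk, Derivation.leibniz, poly_smul_def, poly_smul_def]
    rw [smul_eq_mul, smul_eq_mul, delFun_mk, delFun_mk]

lemma del_x : del k p (truncX k p) = 1 := by
  show delFun k p (Ideal.Quotient.mk _ X) = 1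
  rw [delFun_mk, pd_X]

noncomputable def EE : TruncPolyAlg k p →ₗ[k]
    Derivation k (TruncPolyAlg k p) (TruncPolyAlg k p) where
  toFun f := f • del k p
  map_add' f g := add_smul f g _
  map_smul' c f := by
    ext t
    show ((c • f) • del k p) t = (c • (f • del k p)) t
    rw [Derivation.smul_apply, Derivation.smul_apply, Derivation.smul_apply, smul_assoc]

lemma EE_x (f : TruncPolyAlg k p) : EE k p f (truncX k p) = f := by
  show (f • del k p) (truncX k p) = f
  rw [Derivation.smul_apply, del_x, smul_eq_mul, mul_one]

lemma aeval_truncX (g : Polynomial k) :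
    Polynomial.aeval (truncX k p) g = Ideal.Quotient.mk _ g := by
  have h1 : truncX k p = Ideal.Quotient.mkₐ k (Ideal.span {(X : Polynomial k) ^ p}) X := rfl
  rw [h1, Polynomial.aeval_algHom_apply, Polynomial.aeval_X_left_apply,
    Ideal.Quotient.mkₐ_eq_mk]

lemma adjoin_truncX : Algebra.adjoin k {truncX k p} = ⊤ := by
  rw [Algebra.adjoin_singleton_eq_range_aeval, eq_top_iff]
  rintro z -
  obtain ⟨g, rfl⟩ := Ideal.Quotient.mk_surjective z
  exact ⟨g, aeval_truncX k p g⟩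

variable {k p} in
lemma derivation_ext {D D' : Derivation k (TruncPolyAlg k p) (TruncPolyAlg k p)}
    (h : D (truncX k p) = D' (truncX k p)) : D = D' := by
  refine Derivation.ext_of_adjoin_eq_top {truncX k p} (adjoin_truncX k p) ?_
  intro t ht
  rw [Set.mem_singleton_iff] at ht
  subst ht; exact h

lemma EE_D (D : Derivation k (TruncPolyAlg k p) (TruncPolyAlg k p)) :
    EE k p (D (truncX k p)) = D :=
  derivation_ext (EE_x k p _)

/-- `y = 1 + x`, the key unit of the truncated polynomial algebra. -/
noncomputable def tY : TruncPolyAlg k p := 1 + truncX k p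

lemma tY_pow_p : tY k p ^ p = 1 := by
  rw [tY, add_pow_char, one_pow, truncX_pow, add_zero]

lemma tY_isUnit : IsUnit (tY k p) := by
  refine IsUnit.of_mul_eq_one (tY k p ^ (p - 1)) ?_
  rw [← pow_succ']
  have : p - 1 + 1 = p := Nat.succ_pred_eq_of_pos (Fact.out : p.Prime).pos
  rw [this, tY_pow_p]

lemma tY_pow_congr {m n : ℕ} (h : m % p = n % p) : tY k p ^ m = tY k p ^ n := by
  have key : ∀ m : ℕ, tY k p ^ m = tY k p ^ (m % p) := by
    intro m
    conv_lhs => rw [← Nat.div_add_mod m p]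
    rw [pow_add, pow_mul, tY_pow_p, one_pow, one_mul]
  rw [key m, key n, h]

lemma tY_pow_ne_zero (m : ℕ) : tY k p ^ m ≠ 0 :=
  ((tY_isUnit k p).pow m).ne_zero

/-- The basis family `F u = (1+x)^(u.val+1) ∂`, indexed by `u : ZMod p`;
in terms of the standard basis `e_c = (1+x)^c ∂` this is `e_{u+1}`. -/
noncomputable def FF (u : ZMod p) : Derivation k (TruncPolyAlg k p) (TruncPolyAlg k p) :=
  EE k p (tY k p ^ (u.val + 1))

lemma FF_x (u : ZMod p) : FF k p u (truncX k p) = tY k p ^ (u.val + 1) := EE_x k p _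

lemma FF_tY (u : ZMod p) : FF k p u (tY k p) = tY k p ^ (u.val + 1) := by
  have h2 : FF k p u (tY k p) = FF k p u (truncX k p) := by
    rw [show tY k p = 1 + truncX k p from rfl, map_add, Derivation.map_one_eq_zero, zero_add]
  rw [h2, FF_x]

lemma FF_tY_pow (u : ZMod p) (m : ℕ) :
    FF k p u (tY k p ^ (m + 1)) = (m + 1) • tY k p ^ (m + u.val + 1) := by
  rw [Derivation.leibniz_pow, FF_tY, Nat.add_sub_cancel, smul_eq_mul, ← pow_add,
    Nat.add_assoc]

lemma FF_ne_zero (u : ZMod p) : FF k p u ≠ 0 := by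
  intro h
  have h2 := FF_x k p u
  rw [h, Derivation.zero_apply] at h2
  exact tY_pow_ne_zero k p _ h2.symm

lemma castHom_val (w : ZMod p) :
    (ZMod.castHom (dvd_refl p) k) w = ((w.val : ℕ) : k) := by
  rw [ZMod.castHom_apply]
  exact (ZMod.natCast_val w).symm

lemma bracket_FF (u v : ZMod p) :
    ⁅FF k p u, FF k p v⁆
      = (ZMod.castHom (dvd_refl p) k (v - u)) • FF k p (u + v) := by
  haveI : NeZero p := ⟨(Fact.out : p.Prime).ne_zero⟩
  apply _root_.derivation_ext
  have hL : ⁅FF k p u, FF k p v⁆ (truncX k p)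
      = FF k p u (tY k p ^ (v.val + 1)) - FF k p v (tY k p ^ (u.val + 1)) := by
    rw [Derivation.commutator_apply, FF_x, FF_x]
  rw [hL, FF_tY_pow, FF_tY_pow, Derivation.smul_apply, FF_x]
  have hpow : tY k p ^ ((u + v).val + 1) = tY k p ^ (u.val + v.val + 1) := by
    refine tY_pow_congr k p ?_
    rw [ZMod.val_add]
    exact ((Nat.mod_modEq (u.val + v.val) p).add_right 1 : _)
  rw [hpow]
  have h1 : tY k p ^ (v.val + u.val + 1) = tY k p ^ (u.val + v.val + 1) := by
    rw [Nat.add_comm v.val]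
  rw [h1, ← Nat.cast_smul_eq_nsmul k, ← Nat.cast_smul_eq_nsmul k, ← sub_smul]
  congr 1
  rw [map_sub, castHom_val, castHom_val]
  push_cast
  ring

/-- The span of the powers `(1+x)^(u.val+1)`. -/
noncomputable def VV : Submodule k (TruncPolyAlg k p) :=
  Submodule.span k (Set.range (fun u : ZMod p => tY k p ^ (u.val + 1)))

lemma ypow_succ_mem (n : ℕ) : tY k p ^ (n + 1) ∈ VV k p := by
  haveI : NeZero p := ⟨(Fact.out : p.Prime).ne_zero⟩
  have h : tY k p ^ (n + 1) = tY k p ^ (((n : ZMod p)).val + 1) := by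
    refine tY_pow_congr k p ?_
    rw [ZMod.val_natCast]
    exact ((Nat.mod_modEq n p).add_right 1).symm
  rw [h]
  exact Submodule.subset_span ⟨(n : ZMod p), rfl⟩

lemma ypow_mem (n : ℕ) : tY k p ^ n ∈ VV k p := by
  cases n with
  | zero =>
    have h : (tY k p) ^ 0 = tY k p ^ (p - 1 + 1) := by
      rw [show p - 1 + 1 = p from Nat.succ_pred_eq_of_pos (Fact.out : p.Prime).pos,
        pow_zero, tY_pow_p]
    rw [h]; exact ypow_succ_mem k p _
  | succ n => exact ypow_succ_mem k p n

lemma ymul_mem {v : TruncPolyAlg k p} (hv : v ∈ VV k p) : tY k p * v ∈ VV k p := by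
  induction hv using Submodule.span_induction with
  | mem z hz =>
    obtain ⟨u, rfl⟩ := hz
    rw [← pow_succ']
    exact ypow_mem k p _
  | zero => rw [mul_zero]; exact zero_mem _
  | add y z _ _ hy hz => rw [mul_add]; exact add_mem hy hz
  | smul c y _ hy => rw [mul_smul_comm]; exact Submodule.smul_mem _ _ hy

lemma xpow_mem (n : ℕ) : truncX k p ^ n ∈ VV k p := by
  induction n with
  | zero => rw [pow_zero, ← pow_zero (tY k p)]; exact ypow_mem k p 0
  | succ n ih =>
    have h : truncX k p ^ (n + 1) = tY k p * truncX k p ^ n - truncX k p ^ n := by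
      rw [pow_succ, show tY k p = 1 + truncX k p from rfl]; ring
    rw [h]
    exact sub_mem (ymul_mem k p ih) ih

lemma VV_top : VV k p = ⊤ := by
  rw [eq_top_iff]
  rintro z -
  obtain ⟨g, rfl⟩ := Ideal.Quotient.mk_surjective z
  induction g using Polynomial.induction_on' with
  | add f g hf hg => rw [map_add]; exact add_mem hf hg
  | monomial n c =>
    have h : Ideal.Quotient.mk (Ideal.span {(X : Polynomial k) ^ p}) (Polynomial.monomial n c)
        = c • truncX k p ^ n := by
      rw [← Polynomial.smul_X_eq_monomial, ← Ideal.Quotient.mk_eq_mk,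
        Submodule.Quotient.mk_smul, Ideal.Quotient.mk_eq_mk, map_pow]
    rw [h]
    exact Submodule.smul_mem _ _ (xpow_mem k p n)

lemma span_FF_top : Submodule.span k (Set.range (FF k p)) = ⊤ := by
  rw [eq_top_iff]
  rintro D -
  have hD : D ∈ Submodule.map (EE k p) (VV k p) :=
    ⟨D (truncX k p), by rw [VV_top]; trivial, EE_D k p D⟩
  rw [VV, Submodule.map_span, ← Set.range_comp] at hD
  exact hD

lemma castHom_inj : Function.Injective (ZMod.castHom (dvd_refl p) k) :=
  (ZMod.castHom (dvd_refl p) k).injective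

lemma castHom_sub_ne {u v : ZMod p} (h : u ≠ v) :
    (ZMod.castHom (dvd_refl p) k) (v - u) ≠ 0 := by
  intro h0
  rw [← map_zero (ZMod.castHom (dvd_refl p) k)] at h0
  have h1 : v - u = 0 := castHom_inj k p h0
  rw [sub_eq_zero] at h1
  exact h h1.symm

end WittAux

/-- Extracting eigencomponents: an invariant subspace contains each eigencomponent
of any of its members (for distinct eigenvalues). -/
lemma eig_extract {K M : Type*} [Field K] [AddCommGroup M] [Module K M]
    (W : Submodule K M) (T : M →ₗ[K] M) (hW : ∀ m ∈ W, T m ∈ W)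
    {ι : Type*} [DecidableEq ι] (μ : ι → K) (hμ : Function.Injective μ)
    (s : Finset ι) (w : ι → M)
    (hw : ∀ i ∈ s, T (w i) = μ i • w i) (hsum : (∑ i ∈ s, w i) ∈ W) :
    ∀ i ∈ s, w i ∈ W := by
  induction s using Finset.induction generalizing w with
  | empty => intro i hi; exact absurd hi (Finset.notMem_empty i)
  | @insert j s hj ih =>
    rw [Finset.sum_insert hj] at hsum
    have hTv : T (w j + ∑ i ∈ s, w i) ∈ W := hW _ hsum
    have h2 : T (w j + ∑ i ∈ s, w i) - μ j • (w j + ∑ i ∈ s, w i)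
        = ∑ i ∈ s, (μ i - μ j) • w i := by
      rw [map_add, map_sum, hw j (Finset.mem_insert_self j s),
        Finset.sum_congr rfl (fun i hi => hw i (Finset.mem_insert_of_mem hi)),
        smul_add, Finset.smul_sum, add_sub_add_left_eq_sub, ← Finset.sum_sub_distrib]
      exact Finset.sum_congr rfl fun i _ => (sub_smul _ _ _).symm
    have key : (∑ i ∈ s, (μ i - μ j) • w i) ∈ W :=
      h2 ▸ sub_mem hTv (Submodule.smul_mem _ _ hsum)
    have hws : ∀ i ∈ s, w i ∈ W := by
      intro i hi
      have hne : μ i - μ j ≠ 0 := by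
        refine sub_ne_zero.mpr fun h => ?_
        exact hj (hμ h ▸ hi)
      have h3 := ih (fun i => (μ i - μ j) • w i)
        (fun i hi => by
          rw [map_smul, hw i (Finset.mem_insert_of_mem hi), smul_comm]) key i hi
      have h4 := Submodule.smul_mem W (μ i - μ j)⁻¹ h3
      rwa [inv_smul_smul₀ hne] at h4
    intro i hi
    rcases Finset.mem_insert.mp hi with rfl | his
    · have hrest : (∑ i ∈ s, w i) ∈ W := Submodule.sum_mem W hws
      have h5 := sub_mem hsum hrest
      rwa [add_sub_cancel_right] at h5
    · exact hws i his

/-- The combinatorial core: a subset of `ZMod p` containing `0` and two distinct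
nonzero elements, closed under sums of distinct members, contains a nonempty
"perfect" subset in which every element is a sum of two distinct members. -/
lemma zmod_perfect_set {p : ℕ} [Fact p.Prime] (hp : 3 < p) {T : Set (ZMod p)}
    (hcl : ∀ u ∈ T, ∀ v ∈ T, u ≠ v → u + v ∈ T) {α β : ZMod p}
    (h0 : (0 : ZMod p) ∈ T) (hα : α ∈ T) (hβ : β ∈ T)
    (hα0 : α ≠ 0) (hβ0 : β ≠ 0) (hαβ : α ≠ β) :
    ∃ T0 : Set (ZMod p), T0 ⊆ T ∧ (0 : ZMod p) ∈ T0 ∧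
      ∀ u ∈ T0, ∃ v ∈ T0, ∃ w ∈ T0, v ≠ w ∧ v + w = u := by
  haveI : NeZero p := ⟨(Fact.out : p.Prime).ne_zero⟩
  have h2 : (2 : ZMod p) ≠ 0 := by
    intro h
    have hdvd := (CharP.cast_eq_zero_iff (ZMod p) p 2).mp (by exact_mod_cast h)
    have := Nat.le_of_dvd (by norm_num) hdvd
    omega
  have hdouble : ∀ t : ZMod p, t + t = 0 → t = 0 := by
    intro t ht
    have h21 : (2 : ZMod p) * t = 0 := by rw [two_mul, ht]
    rcases mul_eq_zero.mp h21 with h | h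
    · exact absurd h h2
    · exact h
  by_cases hcase : β = -α
  · refine ⟨{0, α, -α}, ?_, Or.inl rfl, ?_⟩
    · intro t ht
      simp only [Set.mem_insert_iff, Set.mem_singleton_iff] at ht
      rcases ht with rfl | rfl | rfl
      exacts [h0, hα, hcase ▸ hβ]
    · intro u hu
      have hαn : α ≠ -α := by
        intro h
        exact hα0 (hdouble α (by nth_rewrite 2 [h]; rw [add_neg_cancel]))
      simp only [Set.mem_insert_iff, Set.mem_singleton_iff] at hu
      rcases hu with rfl | hu | hu
      · exact ⟨α, Or.inr (Or.inl rfl), -α, Or.inr (Or.inr rfl), hαn, add_neg_cancel α⟩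
      · exact ⟨0, Or.inl rfl, u, Or.inr (Or.inl hu),
          fun h => hα0 (by rw [← hu, ← h]), zero_add u⟩
      · exact ⟨0, Or.inl rfl, u, Or.inr (Or.inr hu),
          fun h => hα0 (neg_eq_zero.mp (by rw [← hu, ← h])), zero_add u⟩
  · have hγ : α + β ≠ 0 := by
      intro h
      rw [add_comm] at h
      exact hcase (eq_neg_of_add_eq_zero_left h)
    have step : ∀ t ∈ T, t + (α + β) ∈ T := by
      intro t ht
      by_cases h1 : t ≠ α ∧ t + α ≠ β
      · have h1b := hcl _ (hcl t ht α hα h1.1) β hβ h1.2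
        rwa [add_assoc] at h1b
      · push_neg at h1
        have htβ : t ≠ β := by
          intro h
          by_cases ht2 : t = α
          · exact hαβ (ht2 ▸ h)
          · have := h1 ht2
            rw [h] at this
            exact hα0 (by linear_combination this - h + h)
        have htβα : t + β ≠ α := by
          intro h
          by_cases ht2 : t = α
          · subst ht2
            exact hβ0 (by linear_combination h)
          · have h3 := h1 ht2
            have ht0 : t = 0 := by
              apply hdouble
              linear_combination h + h3
            rw [ht0, zero_add] at h3
            exact hαβ h3
        have h2b := hcl _ (hcl t ht β hβ htβ) α hα htβα
        rw [add_assoc, add_comm β α] at h2b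
        exact h2b
    have hn : ∀ n : ℕ, (n • (α + β) : ZMod p) ∈ T := by
      intro n
      induction n with
      | zero => simpa using h0
      | succ n ih => rw [succ_nsmul]; exact step _ ih
    have hall : ∀ u : ZMod p, u ∈ T := by
      intro u
      have hmem := hn (u * (α + β)⁻¹).val
      have hcast : (((u * (α + β)⁻¹).val : ℕ) : ZMod p) = u * (α + β)⁻¹ :=
        ZMod.natCast_rightInverse _
      rw [nsmul_eq_mul, hcast, mul_assoc, inv_mul_cancel₀ hγ, mul_one] at hmem
      exact hmem
    refine ⟨Set.univ, fun t _ => hall t, trivial, ?_⟩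
    intro u _
    by_cases hu0 : u = 0
    · refine ⟨1, trivial, -1, trivial, ?_, by rw [hu0, add_neg_cancel]⟩
      intro h
      exact h2 (by linear_combination h)
    · exact ⟨0, trivial, u, trivial, fun h => hu0 h.symm, zero_add u⟩

section WittMain

variable {p : ℕ} [Fact p.Prime] {k : Type*} [Field k] [CharP k p]

lemma FF_mem_closure
    {C : LieSubalgebra k (Derivation k (TruncPolyAlg k p) (TruncPolyAlg k p))}
    {u v : ZMod p} (hu : FF k p u ∈ C) (hv : FF k p v ∈ C) (huv : u ≠ v) :
    FF k p (u + v) ∈ C := by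
  have hb : ⁅FF k p u, FF k p v⁆ ∈ C := C.lie_mem hu hv
  rw [bracket_FF] at hb
  have h2 := C.smul_mem ((ZMod.castHom (dvd_refl p) k) (v - u))⁻¹ hb
  rwa [inv_smul_smul₀ (castHom_sub_ne k p huv)] at h2

lemma not_solvable_of_perfect
    (C : LieSubalgebra k (Derivation k (TruncPolyAlg k p) (TruncPolyAlg k p)))
    (T0 : Set (ZMod p)) (hsub : ∀ u ∈ T0, FF k p u ∈ C)
    (h0 : (0 : ZMod p) ∈ T0)
    (hperf : ∀ u ∈ T0, ∃ v ∈ T0, ∃ w ∈ T0, v ≠ w ∧ v + w = u)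
    (hsolv : LieAlgebra.IsSolvable C) : False := by
  have claim : ∀ n : ℕ, ∀ u, ∀ hu : u ∈ T0,
      (⟨FF k p u, hsub u hu⟩ : C) ∈ LieAlgebra.derivedSeries k C n := by
    intro n
    induction n with
    | zero => intro u hu; exact LieSubmodule.mem_top _
    | succ n ih =>
      intro u hu
      obtain ⟨v, hv, w, hw, hvw, hsumeq⟩ := hperf u hu
      have hb : ⁅(⟨FF k p v, hsub v hv⟩ : C), (⟨FF k p w, hsub w hw⟩ : C)⁆
          ∈ LieAlgebra.derivedSeries k C (n + 1) := by
        rw [LieAlgebra.derivedSeries_def, LieAlgebra.derivedSeriesOfIdeal_succ]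
        exact LieSubmodule.lie_mem_lie (ih v hv) (ih w hw)
      have heq : (⟨FF k p u, hsub u hu⟩ : C)
          = ((ZMod.castHom (dvd_refl p) k (w - v))⁻¹ : k)
              • ⁅(⟨FF k p v, hsub v hv⟩ : C), (⟨FF k p w, hsub w hw⟩ : C)⁆ := by
        apply Subtype.ext
        show FF k p u = ((ZMod.castHom (dvd_refl p) k (w - v))⁻¹ : k)
          • (⁅FF k p v, FF k p w⁆ : Derivation k (TruncPolyAlg k p) (TruncPolyAlg k p))
        rw [bracket_FF, inv_smul_smul₀ (castHom_sub_ne k p hvw), hsumeq]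
      rw [heq]
      exact (LieAlgebra.derivedSeries k C (n + 1)).smul_mem _ hb
  obtain ⟨n, hn⟩ := (LieAlgebra.isSolvable_iff k C).mp hsolv
  have hmem := claim n 0 h0
  rw [hn, LieSubmodule.mem_bot] at hmem
  exact FF_ne_zero k p 0 (congrArg Subtype.val hmem)

lemma solvable_subalg_le (hp : 3 < p) {α : ZMod p} (hα0 : α ≠ 0)
    (C : LieSubalgebra k (Derivation k (TruncPolyAlg k p) (TruncPolyAlg k p)))
    (hC : LieAlgebra.IsSolvable C)
    (h0C : FF k p 0 ∈ C) (hαC : FF k p α ∈ C) :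
    ∀ D ∈ C, D ∈ Submodule.span k {FF k p 0, FF k p α} := by
  haveI : NeZero p := ⟨(Fact.out : p.Prime).ne_zero⟩
  intro D hD
  by_contra hDB
  have hDspan : D ∈ Submodule.span k (Set.range (FF k p)) := by
    rw [span_FF_top]; trivial
  obtain ⟨c, hc⟩ := (Submodule.mem_span_range_iff_exists_fun k).mp hDspan
  have hT : ∀ m ∈ C.toSubmodule, ((LieAlgebra.ad k _) (FF k p 0)) m ∈ C.toSubmodule := by
    intro m hm
    rw [LieAlgebra.ad_apply]
    exact C.lie_mem h0C hm
  have heig : ∀ u ∈ Finset.univ, ((LieAlgebra.ad k _) (FF k p 0)) (c u • FF k p u)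
      = (ZMod.castHom (dvd_refl p) k u) • (c u • FF k p u) := by
    intro u _
    rw [map_smul, LieAlgebra.ad_apply, bracket_FF, sub_zero, zero_add, smul_comm]
  have hext := eig_extract C.toSubmodule ((LieAlgebra.ad k _) (FF k p 0)) hT
      (fun u => ZMod.castHom (dvd_refl p) k u) (castHom_inj k p) Finset.univ
      (fun u => c u • FF k p u) heig (by rw [hc]; exact hD)
  by_cases hout : ∀ u : ZMod p, u ≠ 0 → u ≠ α → c u = 0
  · apply hDB
    have h0α : (0 : ZMod p) ≠ α := fun h => hα0 h.symm
    have hDrepr : D = c 0 • FF k p 0 + c α • FF k p α := by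
      rw [← hc, ← Finset.sum_subset (Finset.subset_univ ({0, α} : Finset (ZMod p)))
        (fun u _ hu => by
          simp only [Finset.mem_insert, Finset.mem_singleton, not_or] at hu
          rw [hout u hu.1 hu.2, zero_smul])]
      rw [Finset.sum_pair h0α]
    rw [hDrepr]
    exact Submodule.add_mem _
      (Submodule.smul_mem _ _ (Submodule.subset_span (Set.mem_insert _ _)))
      (Submodule.smul_mem _ _ (Submodule.subset_span (Set.mem_insert_of_mem _ rfl)))
  · push_neg at hout
    obtain ⟨β, hβ0, hβα, hcβ⟩ := hout
    have hβC : FF k p β ∈ C := by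
      have h1 := hext β (Finset.mem_univ β)
      have h2 := C.toSubmodule.smul_mem (c β)⁻¹ h1
      rwa [inv_smul_smul₀ hcβ] at h2
    have hcl : ∀ u ∈ {u : ZMod p | FF k p u ∈ C}, ∀ v ∈ {u : ZMod p | FF k p u ∈ C},
        u ≠ v → u + v ∈ {u : ZMod p | FF k p u ∈ C} :=
      fun u hu v hv huv => FF_mem_closure hu hv huv
    obtain ⟨T0, hT0sub, hT00, hperf⟩ :=
      zmod_perfect_set hp hcl h0C hαC hβC hα0 hβ0 (fun h => hβα h.symm)
    exact not_solvable_of_perfect C T0 (fun u hu => hT0sub hu) hT00 hperf hC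

end WittMain

private lemma lie_smul_der {R A : Type*} [CommRing R] [CommRing A] [Algebra R A]
    (c : R) (D E : Derivation R A A) : ⁅D, c • E⁆ = c • ⁅D, E⁆ := by
  ext t
  simp only [Derivation.commutator_apply, Derivation.smul_apply, Derivation.map_smul,
    smul_sub]

private lemma smul_lie_der {R A : Type*} [CommRing R] [CommRing A] [Algebra R A]
    (c : R) (D E : Derivation R A A) : ⁅c • D, E⁆ = c • ⁅D, E⁆ := by
  ext t
  simp only [Derivation.commutator_apply, Derivation.smul_apply, Derivation.map_smul,
    smul_sub]

private lemma add_lie_der {R A : Type*} [CommRing R] [CommRing A] [Algebra R A]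
    (D E F : Derivation R A A) : ⁅D + E, F⁆ = ⁅D, F⁆ + ⁅E, F⁆ := by
  ext t
  simp only [Derivation.commutator_apply, Derivation.add_apply, map_add]
  ring

private lemma lie_add_der {R A : Type*} [CommRing R] [CommRing A] [Algebra R A]
    (D E F : Derivation R A A) : ⁅D, E + F⁆ = ⁅D, E⁆ + ⁅D, F⁆ := by
  ext t
  simp only [Derivation.commutator_apply, Derivation.add_apply, map_add]
  ring

private lemma lie_self_der {R A : Type*} [CommRing R] [CommRing A] [Algebra R A]
    (D : Derivation R A A) : ⁅D, D⁆ = 0 := by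
  ext t
  simp only [Derivation.commutator_apply, sub_self, Derivation.zero_apply]

/-- for `p > 3` and `2 ≤ a ≤ p - 1`, the two-dimensional
subspace `k·(1+x)∂ + k·(1+x)^a∂` of `W(1) = Der_k(k[X]/(X^p))` is a Lie
subalgebra which is maximal solvable: it is solvable and every solvable Lie
subalgebra of `W(1)` containing it equals it (no solvable subalgebra strictly
contains it). -/
theorem witt_generic_borel_maximal_solvable
    {p : ℕ} [Fact p.Prime] (hp : 3 < p) {k : Type*} [Field k] [CharP k p]
    (a : ℕ) (ha1 : 2 ≤ a) (hap : a ≤ p - 1)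
    (D1 Da : Derivation k (TruncPolyAlg k p) (TruncPolyAlg k p))
    (hD1 : D1 (truncX k p) = 1 + truncX k p)
    (hDa : Da (truncX k p) = (1 + truncX k p) ^ a) :
    ∃ B : LieSubalgebra k (Derivation k (TruncPolyAlg k p) (TruncPolyAlg k p)),
      B.toSubmodule = Submodule.span k {D1, Da} ∧
      LieAlgebra.IsSolvable B ∧
      ∀ C : LieSubalgebra k (Derivation k (TruncPolyAlg k p) (TruncPolyAlg k p)),
        LieAlgebra.IsSolvable C → B ≤ C → C = B := by
  haveI : NeZero p := ⟨(Fact.out : p.Prime).ne_zero⟩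
  set α : ZMod p := (a : ZMod p) - 1 with hαdef
  have haval : α.val = a - 1 := by
    have h1 : α = ((a - 1 : ℕ) : ZMod p) := by
      rw [hαdef, Nat.cast_sub (by omega : 1 ≤ a), Nat.cast_one]
    rw [h1, ZMod.val_cast_of_lt (by omega : a - 1 < p)]
  have hα0 : α ≠ 0 := by
    intro h
    rw [h, ZMod.val_zero] at haval
    omega
  have hF0 : FF k p 0 = D1 := by
    apply _root_.derivation_ext
    rw [FF_x, hD1, ZMod.val_zero, pow_one]
    rfl
  have hFα : FF k p α = Da := by
    apply _root_.derivation_ext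
    rw [FF_x, hDa, haval, show a - 1 + 1 = a by omega]
    rfl
  have hbr2 : ∀ c1 c2 d1 d2 : k, ⁅c1 • D1 + c2 • Da, d1 • D1 + d2 • Da⁆
      = ((c1 * d2 - c2 * d1) * (ZMod.castHom (dvd_refl p) k α)) • Da := by
    intro c1 c2 d1 d2
    have hbr : ⁅D1, Da⁆ = (ZMod.castHom (dvd_refl p) k α) • Da := by
      rw [← hF0, ← hFα, bracket_FF, sub_zero, zero_add]
    have hbr' : ⁅Da, D1⁆ = (-(ZMod.castHom (dvd_refl p) k α)) • Da := by
      rw [show (-(ZMod.castHom (dvd_refl p) k α)) • Da = -((ZMod.castHom (dvd_refl p) k α) • Da)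
        from by ext t; rw [Derivation.neg_apply, Derivation.smul_apply, Derivation.smul_apply,
          neg_smul], ← hbr]; exact (lie_skew Da D1).symm
    simp only [lie_add_der, add_lie_der, smul_lie_der, lie_smul_der, lie_self_der,
      smul_zero, add_zero, zero_add, hbr, hbr', smul_neg, smul_smul, ← neg_smul, ← add_smul]
    congr 1
    ring
  have hliemem : ∀ {x y : Derivation k (TruncPolyAlg k p) (TruncPolyAlg k p)},
      x ∈ Submodule.span k {D1, Da} → y ∈ Submodule.span k {D1, Da} →
      ⁅x, y⁆ ∈ Submodule.span k {D1, Da} := by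
    intro x y hx hy
    obtain ⟨c1, c2, rfl⟩ := Submodule.mem_span_pair.mp hx
    obtain ⟨d1, d2, rfl⟩ := Submodule.mem_span_pair.mp hy
    rw [hbr2]
    exact Submodule.smul_mem _ _ (Submodule.subset_span (Set.mem_insert_of_mem _ rfl))
  refine ⟨{ toSubmodule := Submodule.span k {D1, Da},
            lie_mem' := fun hx hy => hliemem hx hy }, rfl, ?_, ?_⟩
  · -- solvability
    set B : LieSubalgebra k (Derivation k (TruncPolyAlg k p) (TruncPolyAlg k p)) :=
      { toSubmodule := Submodule.span k {D1, Da},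
        lie_mem' := fun hx hy => hliemem hx hy } with hBdef
    have hDamem : Da ∈ B := Submodule.subset_span (Set.mem_insert_of_mem _ rfl)
    set z : B := ⟨Da, hDamem⟩ with hzdef
    have hkey : ∀ g h : B, ∃ c : k, ⁅g, h⁆ = c • z := by
      intro g h
      obtain ⟨c1, c2, hg⟩ := Submodule.mem_span_pair.mp g.2
      obtain ⟨d1, d2, hh⟩ := Submodule.mem_span_pair.mp h.2
      refine ⟨(c1 * d2 - c2 * d1) * (ZMod.castHom (dvd_refl p) k α), ?_⟩
      apply Subtype.ext
      have hcoe : (((((c1 * d2 - c2 * d1) * (ZMod.castHom (dvd_refl p) k α)) • z : B)) :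
          Derivation k (TruncPolyAlg k p) (TruncPolyAlg k p))
          = ((c1 * d2 - c2 * d1) * (ZMod.castHom (dvd_refl p) k α)) • Da := rfl
      rw [LieSubalgebra.coe_bracket, hcoe, ← hg, ← hh, hbr2]
    set Z : LieIdeal k B :=
      { toSubmodule := Submodule.span k {z},
        lie_mem := by
          intro x m hm
          obtain ⟨c', hc'⟩ := hkey x m
          show ⁅x, m⁆ ∈ Submodule.span k {z}
          rw [hc']
          exact Submodule.smul_mem _ _ (Submodule.mem_span_singleton_self z) } with hZdef
    have der1 : LieAlgebra.derivedSeries k B 1 ≤ Z := by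
      rw [LieAlgebra.derivedSeries_def, LieAlgebra.derivedSeriesOfIdeal_succ,
        LieAlgebra.derivedSeriesOfIdeal_zero, LieSubmodule.lieIdeal_oper_eq_span,
        LieSubmodule.lieSpan_le]
      rintro m ⟨x, n, rfl⟩
      obtain ⟨c', hc'⟩ := hkey x n
      show ⁅(x : B), (n : B)⁆ ∈ Submodule.span k {z}
      rw [hc']
      exact Submodule.smul_mem _ _ (Submodule.mem_span_singleton_self z)
    have hZZ : ⁅Z, Z⁆ = (⊥ : LieIdeal k B) := by
      rw [LieSubmodule.lieIdeal_oper_eq_span, LieSubmodule.lieSpan_eq_bot_iff]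
      rintro m ⟨x, n, rfl⟩
      obtain ⟨cx, hx⟩ := Submodule.mem_span_singleton.mp x.2
      obtain ⟨cn, hn⟩ := Submodule.mem_span_singleton.mp n.2
      rw [← hx, ← hn, smul_lie, lie_smul, lie_self, smul_zero, smul_zero]
    have der2 : LieAlgebra.derivedSeries k B 2 = ⊥ := by
      rw [LieAlgebra.derivedSeries_def, LieAlgebra.derivedSeriesOfIdeal_succ]
      refine le_bot_iff.mp ?_
      calc ⁅LieAlgebra.derivedSeriesOfIdeal k B 1 ⊤, LieAlgebra.derivedSeriesOfIdeal k B 1 ⊤⁆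
          ≤ ⁅Z, Z⁆ := LieSubmodule.mono_lie der1 der1
        _ = ⊥ := hZZ
    exact LieAlgebra.IsSolvable.mk der2
  · -- maximality
    intro C hC hBC
    have hD1B : D1 ∈ Submodule.span k {D1, Da} := Submodule.subset_span (Set.mem_insert _ _)
    have hDaB : Da ∈ Submodule.span k {D1, Da} :=
      Submodule.subset_span (Set.mem_insert_of_mem _ rfl)
    have h0C : FF k p 0 ∈ C := by rw [hF0]; exact hBC hD1B
    have hαC : FF k p α ∈ C := by rw [hFα]; exact hBC hDaB
    have hle := solvable_subalg_le hp hα0 C hC h0C hαC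
    rw [hF0, hFα] at hle
    exact le_antisymm (fun D hD => hle D hD) hBC
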